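/- Let X, Y be Banach spaces with X compactly embedded in Y. Suppose B ∈ C_w([0,∞); L²(Ω)) (weakly continuous in time with values in L²) and A(t) is defined for each t as a vector potential of B(t) via a fixed bounded linear right inverse of curl, A = K(B), where K : L²(Ω) → H¹(Ω) is bounded linear. If moreover ∂_t B is bounded in L¹_loc(0,∞; (H¹_σ)*) then t ↦ A(t) belongs to C([0,∞); L²(Ω)) (strongly continuous), and consequently any quantity of the form t ↦ ∫_Ω (A(t) + A')·(B(t) − B') dx that is constant for a.e. t is constant for all t. -/

import Mathlib

open MeasureTheory Set Filter Topology

theorem stmt14_aux_dense (S : Set ℝ) (hS : ∀ᵐ s ∂(volume.restrict (Ici (0:ℝ))), s ∈ S)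
    (t : ℝ) (ht : 0 ≤ t) :
    ∃ u : ℕ → ℝ, (∀ n, u n ∈ S ∧ 0 ≤ u n) ∧ Tendsto u atTop (𝓝 t) := by
  have key : ∀ n : ℕ, ∃ s, s ∈ S ∧ s ∈ Icc t (t + 1/(n+1)) := by
    intro n
    have hpos : 0 < (volume.restrict (Ici (0:ℝ))) (Icc t (t + 1/(n+1))) := by
      rw [Measure.restrict_apply measurableSet_Icc]
      have : Icc t (t + 1/(n+1)) ∩ Ici 0 = Icc t (t + 1/(n+1)) := by
        apply inter_eq_self_of_subset_left
        intro x hx; exact le_trans ht hx.1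
      rw [this, Real.volume_Icc]
      simp only [add_sub_cancel_left]
      rw [ENNReal.ofReal_pos]
      positivity
    have hne : ((volume.restrict (Ici (0:ℝ))) (S ∩ Icc t (t + 1/(n+1)))) ≠ 0 := by
      intro h0
      have hle : (volume.restrict (Ici (0:ℝ))) (Icc t (t + 1/(n+1))) ≤
          (volume.restrict (Ici (0:ℝ))) (S ∩ Icc t (t + 1/(n+1))) +
          (volume.restrict (Ici (0:ℝ))) Sᶜ := by
        apply le_trans (measure_mono ?_) (measure_union_le _ _)
        intro x hx
        by_cases hxS : x ∈ S
        · exact Or.inl ⟨hxS, hx⟩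
        · exact Or.inr hxS
      rw [h0, zero_add] at hle
      have hSc : (volume.restrict (Ici (0:ℝ))) Sᶜ = 0 := by
        have := mem_ae_iff.mp hS
        simpa [Set.compl_setOf] using this
      rw [hSc] at hle
      exact absurd (le_antisymm hle zero_le) (ne_of_gt hpos)
    have := nonempty_of_measure_ne_zero hne
    obtain ⟨s, hs1, hs2⟩ := this
    exact ⟨s, hs1, hs2⟩
  choose u hu1 hu2 using key
  refine ⟨u, fun n => ⟨hu1 n, le_trans ht (hu2 n).1⟩, ?_⟩
  have h1 : Tendsto (fun n : ℕ => t + 1/((n:ℝ)+1)) atTop (𝓝 (t + 0)) :=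
    tendsto_const_nhds.add tendsto_one_div_add_atTop_nhds_zero_nat
  rw [add_zero] at h1
  exact tendsto_of_tendsto_of_tendsto_of_le_of_le tendsto_const_nhds h1
    (fun n => (hu2 n).1) (fun n => (hu2 n).2)

/-- Abstract Aubin–Lions upgrade: `H1` is compactly embedded in the
Hilbert space `L2` via `ι`, `B : [0,∞) → L2` is bounded and weakly continuous, the
vector potential is `A = ι(K(B))` for a bounded linear (Biot–Savart-type right inverse
of curl) `K : L2 → H1`, and `∂ₜB` is bounded in `L¹_loc` with values in the dual of
`H1` (expressed by the integral oscillation bound with locally integrable `g`). Then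
`t ↦ A(t)` is strongly continuous in `L2`, and consequently any helicity-type quantity
`t ↦ ⟨A(t) + A', B(t) - B'⟩` that is constant for a.e. `t ≥ 0` is constant for all
`t ≥ 0`. -/
theorem stmt_14 {L2 H1 : Type*}
    [NormedAddCommGroup L2] [InnerProductSpace ℝ L2] [CompleteSpace L2]
    [NormedAddCommGroup H1] [NormedSpace ℝ H1]
    (ι : H1 →L[ℝ] L2) (hcomp : IsCompactOperator ι) (hdense : DenseRange ι)
    (K : L2 →L[ℝ] H1)
    (B : ℝ → L2) (M : ℝ) (hbd : ∀ t : ℝ, 0 ≤ t → ‖B t‖ ≤ M)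
    (hweakcont : ∀ w : L2, ContinuousOn (fun t => (inner ℝ (B t) w : ℝ)) (Ici 0))
    (g : ℝ → ℝ) (hg0 : ∀ τ, 0 ≤ g τ)
    (hgloc : ∀ T : ℝ, 0 < T → IntegrableOn g (Icc 0 T))
    (hdB : ∀ φ : H1, ∀ s t : ℝ, 0 ≤ s → s ≤ t →
      |(inner ℝ (B t - B s) (ι φ) : ℝ)| ≤ ‖φ‖ * ∫ τ in Icc s t, g τ) :
    ContinuousOn (fun t => ι (K (B t))) (Ici 0) ∧
    ∀ (A' B' : L2) (cst : ℝ),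
      (∀ᵐ t ∂(volume.restrict (Ici (0:ℝ))),
        (inner ℝ (ι (K (B t)) + A') (B t - B') : ℝ) = cst) →
      ∀ t : ℝ, 0 ≤ t → (inner ℝ (ι (K (B t)) + A') (B t - B') : ℝ) = cst := by
  set T : L2 →L[ℝ] L2 := ι.comp K with hT
  set A : ℝ → L2 := fun t => T (B t) with hA
  have hAeq : ∀ t, ι (K (B t)) = A t := fun t => rfl
  -- compactness of image
  have hTcomp : IsCompactOperator T := hcomp.comp_clm K
  have hCcomp : IsCompact (closure (T '' Metric.closedBall 0 M)) :=
    IsCompactOperator.isCompact_closure_image_closedBall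
      (f := (T : L2 →ₗ[ℝ] L2)) hTcomp M
  set C := closure (T '' Metric.closedBall 0 M) with hC
  have hmemC : ∀ s : ℝ, 0 ≤ s → A s ∈ C := by
    intro s hs
    exact subset_closure ⟨B s, Metric.mem_closedBall.mpr
      (by simpa [dist_zero_right] using hbd s hs), rfl⟩
  -- weak continuity of A
  have hAweak : ∀ w : L2, ContinuousOn (fun t => (inner ℝ (A t) w : ℝ)) (Ici 0) := by
    intro w
    have h := hweakcont ((ContinuousLinearMap.adjoint T) w)
    have : ∀ t : ℝ, (inner ℝ (B t) ((ContinuousLinearMap.adjoint T) w) : ℝ)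
        = (inner ℝ (A t) w : ℝ) := by
      intro t
      rw [ContinuousLinearMap.adjoint_inner_right]
    simpa [this] using h
  -- key sequential strong convergence
  have key : ∀ t : ℝ, 0 ≤ t → ∀ v : ℕ → ℝ, (∀ n, 0 ≤ v n) →
      Tendsto v atTop (𝓝 t) → Tendsto (fun n => A (v n)) atTop (𝓝 (A t)) := by
    intro t ht v hv hvt
    have hv' : Tendsto v atTop (𝓝[Ici 0] t) :=
      tendsto_nhdsWithin_iff.mpr ⟨hvt, Eventually.of_forall hv⟩
    have hweakv : ∀ w : L2, Tendsto (fun n => (inner ℝ (A (v n)) w : ℝ)) atTop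
        (𝓝 (inner ℝ (A t) w : ℝ)) := by
      intro w
      exact ((hAweak w t ht).tendsto).comp hv'
    apply tendsto_of_subseq_tendsto
    intro ns hns
    obtain ⟨x, hxC, ms, hms, hconv⟩ := hCcomp.tendsto_subseq
      (x := fun n => A (v (ns n))) (fun n => hmemC _ (hv _))
    refine ⟨ms, ?_⟩
    have hx : x = A t := by
      apply ext_inner_right ℝ
      intro w
      have h1 : Tendsto (fun n => (inner ℝ (A (v (ns (ms n)))) w : ℝ)) atTop
          (𝓝 (inner ℝ (A t) w : ℝ)) :=
        (hweakv w).comp ((hns.comp hms.tendsto_atTop))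
      have h2 : Tendsto (fun n => (inner ℝ (A (v (ns (ms n)))) w : ℝ)) atTop
          (𝓝 (inner ℝ x w : ℝ)) :=
        ((Continuous.inner continuous_id continuous_const).tendsto x).comp hconv
      exact tendsto_nhds_unique h2 h1
    rw [← hx]
    exact hconv
  -- strong continuity of A
  have hcont : ContinuousOn A (Ici 0) := by
    intro t ht
    rw [ContinuousWithinAt]
    apply tendsto_iff_seq_tendsto.mpr
    intro u hu
    have huIci : ∀ᶠ n in atTop, u n ∈ Ici 0 :=
      hu.eventually (eventually_mem_nhdsWithin)
    have hut : Tendsto u atTop (𝓝 t) := hu.mono_right nhdsWithin_le_nhds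
    set v : ℕ → ℝ := fun n => max (u n) 0 with hvdef
    have hvt : Tendsto v atTop (𝓝 t) := by
      have := hut.max (tendsto_const_nhds (x := (0:ℝ)))
      rwa [max_eq_left ht] at this
    have h1 : Tendsto (fun n => A (v n)) atTop (𝓝 (A t)) :=
      key t ht v (fun n => le_max_right _ _) hvt
    apply h1.congr'
    filter_upwards [huIci] with n hn
    simp [hvdef, max_eq_left (mem_Ici.mp hn)]
  refine ⟨hcont, ?_⟩
  -- part 2
  intro A' B' cst hae t ht
  set f : ℝ → ℝ := fun s => (inner ℝ (A s + A') (B s - B') : ℝ) with hf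
  have hfcont : ContinuousOn f (Ici 0) := by
    intro t ht
    have hsplit : ∀ s : ℝ, f s = (inner ℝ (A s - A t) (B s - B') : ℝ)
        + ((inner ℝ (B s) (A t + A') : ℝ) - (inner ℝ B' (A t + A') : ℝ)) := by
      intro s
      have e1 : A s + A' = (A s - A t) + (A t + A') := by abel
      calc f s = (inner ℝ ((A s - A t) + (A t + A')) (B s - B') : ℝ) := by rw [hf, ← e1]
        _ = (inner ℝ (A s - A t) (B s - B') : ℝ)
            + (inner ℝ (A t + A') (B s - B') : ℝ) := inner_add_left _ _ _
        _ = _ := by rw [inner_sub_right (𝕜 := ℝ) (A t + A') (B s) B',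
              real_inner_comm (A t + A') (B s), real_inner_comm (A t + A') B']
    have h2 : Tendsto (fun s => (inner ℝ (B s) (A t + A') : ℝ)
        - (inner ℝ B' (A t + A') : ℝ)) (𝓝[Ici 0] t)
        (𝓝 ((inner ℝ (B t) (A t + A') : ℝ) - (inner ℝ B' (A t + A') : ℝ))) :=
      ((hweakcont (A t + A') t ht).tendsto).sub tendsto_const_nhds
    have h1 : Tendsto (fun s => (inner ℝ (A s - A t) (B s - B') : ℝ))
        (𝓝[Ici 0] t) (𝓝 0) := by
      apply (tendsto_zero_iff_abs_tendsto_zero _).mpr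
      apply squeeze_zero' (Eventually.of_forall fun s => abs_nonneg _)
      · filter_upwards [eventually_mem_nhdsWithin] with s hs
        calc |(inner ℝ (A s - A t) (B s - B') : ℝ)| ≤ ‖A s - A t‖ * ‖B s - B'‖ :=
              abs_real_inner_le_norm _ _
          _ ≤ ‖A s - A t‖ * (M + ‖B'‖) := by
              apply mul_le_mul_of_nonneg_left _ (norm_nonneg _)
              exact le_trans (norm_sub_le _ _) (add_le_add_left (hbd s hs) _)
      · have : Tendsto (fun s => ‖A s - A t‖) (𝓝[Ici 0] t) (𝓝 0) := by
          rw [← tendsto_iff_norm_sub_tendsto_zero]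
          exact (hcont t ht).tendsto
        simpa using this.mul_const (M + ‖B'‖)
    have := h1.add h2
    rw [zero_add] at this
    have hft : f t = (inner ℝ (B t) (A t + A') : ℝ) - (inner ℝ B' (A t + A') : ℝ) := by
      rw [hsplit t]; simp
    rw [ContinuousWithinAt, hft]
    exact this.congr (fun s => (hsplit s).symm)
  -- upgrade a.e. to everywhere
  obtain ⟨u, hu1, hu2⟩ := stmt14_aux_dense {s | f s = cst} (by simpa [hf, hAeq] using hae) t ht
  have huw : Tendsto u atTop (𝓝[Ici 0] t) :=
    tendsto_nhdsWithin_iff.mpr ⟨hu2, Eventually.of_forall fun n => (hu1 n).2⟩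
  have h1 : Tendsto (fun n => f (u n)) atTop (𝓝 (f t)) :=
    ((hfcont t ht).tendsto).comp huw
  have h2 : Tendsto (fun n => f (u n)) atTop (𝓝 cst) := by
    have : (fun n => f (u n)) = fun _ => cst := funext fun n => (hu1 n).1
    rw [this]; exact tendsto_const_nhds
  have : f t = cst := tendsto_nhds_unique h1 h2
  simpa [hf, hAeq] using this
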